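/- arXiv:1602.02440 — 2 statements merged into one kernel-verified Lean document; each statement's English description precedes it below -/
import Mathlib

section
/- Let p be prime, e a divisor of p-1, and n an integer not divisible by p. Then (φ(e)/e) · Σ_{d | e} (μ(d)/φ(d)) · Σ_{χ of order d} χ(n) equals 1 if n is e-free modulo p, and 0 otherwise. -/
open Finset

/-- An integer `n` coprime to `p` is `e`-free if `n ≡ m ^ d (mod p)` with `d ∣ e`
implies `d = 1`. -/
def IsEFree (p e : ℕ) (n : ℤ) : Prop :=
  ∀ (m : ℤ) (d : ℕ), d ∣ e → (n : ZMod p) = (m : ZMod p) ^ d → d = 1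

namespace EFreeAux

open ArithmeticFunction
open scoped ArithmeticFunction.zeta

noncomputable section

/-- The weight `μ(d)/φ(d)` as a ℂ-valued arithmetic function. -/
def wf : ArithmeticFunction ℂ :=
  ⟨fun d => (moebius d : ℂ) / (Nat.totient d : ℂ), by simp⟩

lemma wf_apply (d : ℕ) : wf d = (moebius d : ℂ) / (Nat.totient d : ℂ) := rfl

lemma wf_mult : wf.IsMultiplicative := by
  constructor
  · simp [wf_apply]
  · intro m n hmn
    simp only [wf_apply]
    rw [isMultiplicative_moebius.map_mul_of_coprime hmn, Nat.totient_mul hmn]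
    push_cast
    rw [div_mul_div_comm]

/-- `c ↦ c·[c ∣ a]` as a ℂ-valued arithmetic function. -/
def fA (a : ℕ) : ArithmeticFunction ℂ :=
  ⟨fun c => if c ∣ a then (c : ℂ) else 0, by simp⟩

lemma fA_apply (a c : ℕ) : fA a c = if c ∣ a then (c : ℂ) else 0 := rfl

lemma fA_mult (a : ℕ) : (fA a).IsMultiplicative := by
  constructor
  · simp [fA_apply]
  · intro m n hmn
    simp only [fA_apply]
    by_cases h : m * n ∣ a
    · rw [if_pos h, if_pos ((dvd_mul_right m n).trans h),
        if_pos ((dvd_mul_left n m).trans h)]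
      push_cast; ring
    · rw [if_neg h]
      by_cases hm : m ∣ a
      · have hn : ¬ n ∣ a := fun hn => h (Nat.Coprime.mul_dvd_of_dvd_of_dvd hmn hm hn)
        rw [if_neg hn, mul_zero]
      · rw [if_neg hm, zero_mul]

/-- `μ ⋆ fA a`. -/
def AA (a : ℕ) : ArithmeticFunction ℂ :=
  ((moebius : ArithmeticFunction ℤ) : ArithmeticFunction ℂ) * fA a

lemma AA_mult (a : ℕ) : (AA a).IsMultiplicative :=
  isMultiplicative_moebius.intCast.mul (fA_mult a)

/-- The left-hand side as an arithmetic function of `e`. -/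
def LA (a : ℕ) : ArithmeticFunction ℂ := (wf.pmul (AA a)) * ζ

lemma LA_mult (a : ℕ) : (LA a).IsMultiplicative :=
  (wf_mult.pmul (AA_mult a)).mul isMultiplicative_zeta.natCast

/-- The right-hand side as an arithmetic function of `e`. -/
def HA (a : ℕ) : ArithmeticFunction ℂ :=
  ⟨fun e => if Nat.gcd a e = 1 then (e : ℂ) / (Nat.totient e : ℂ) else 0, by simp⟩

lemma HA_apply (a e : ℕ) :
    HA a e = if Nat.gcd a e = 1 then (e : ℂ) / (Nat.totient e : ℂ) else 0 := rfl

lemma HA_mult (a : ℕ) : (HA a).IsMultiplicative := by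
  constructor
  · simp [HA_apply]
  · intro m n hmn
    simp only [HA_apply, Nat.coprime_mul_iff_right]
    by_cases hm : Nat.gcd a m = 1
    · by_cases hn : Nat.gcd a n = 1
      · rw [if_pos ⟨hm, hn⟩, if_pos hm, if_pos hn, Nat.totient_mul hmn]
        push_cast
        rw [div_mul_div_comm]
      · rw [if_neg (fun h => hn h.2), if_neg hn, mul_zero]
    · rw [if_neg (fun h => hm h.1), if_neg hm, zero_mul]

lemma LA_eq_HA (a : ℕ) : LA a = HA a := by
  rw [ArithmeticFunction.IsMultiplicative.eq_iff_eq_on_prime_powers _ (LA_mult a) _ (HA_mult a)]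
  intro q k hq
  have hq1 : 1 < q := hq.one_lt
  have hq0 : (0:ℕ) < q := hq.pos
  have hqC : ((q : ℂ) - 1) ≠ 0 := by
    refine sub_ne_zero.mpr fun h => ?_
    have : q = 1 := by exact_mod_cast h
    omega
  rcases Nat.eq_zero_or_pos k with rfl | hk
  · simp [(LA_mult a).map_one, (HA_mult a).map_one]
  -- value of AA at q
  have hAq : AA a q = (if q ∣ a then (q : ℂ) else 0) - 1 := by
    rw [AA, ArithmeticFunction.mul_apply, Nat.sum_divisorsAntidiagonal
      (f := fun x y => ((moebius : ArithmeticFunction ℤ) : ArithmeticFunction ℂ) x * fA a y),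
      hq.divisors]
    rw [Finset.sum_insert (by simp [hq1.ne])]
    simp only [Finset.sum_singleton, Nat.div_one, Nat.div_self hq0]
    rw [fA_apply, fA_apply]
    simp [moebius_apply_one, moebius_apply_prime hq]
    ring
  -- LHS value
  have hL : LA a (q ^ k) = if q ∣ a then 0 else (q : ℂ) / ((q : ℂ) - 1) := by
    rw [LA, coe_mul_zeta_apply, Nat.sum_divisors_prime_pow hq]
    have hsub : Finset.range 2 ⊆ Finset.range (k + 1) := by
      apply Finset.range_subset_range.mpr; omega
    rw [← Finset.sum_subset hsub]
    · rw [Finset.sum_range_succ, Finset.sum_range_one]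
      simp only [pow_zero, pow_one, ArithmeticFunction.pmul_apply]
      rw [wf_mult.map_one, (AA_mult a).map_one, hAq, wf_apply]
      rw [moebius_apply_prime hq, Nat.totient_prime hq]
      by_cases hqa : q ∣ a
      · rw [if_pos hqa, if_pos hqa]
        push_cast [Nat.cast_sub hq.one_le]
        field_simp
        ring
      · rw [if_neg hqa, if_neg hqa]
        push_cast [Nat.cast_sub hq.one_le]
        field_simp
        ring
    · intro i hi hi2
      simp only [Finset.mem_range] at hi hi2
      have h2i : 2 ≤ i := by omega
      rw [ArithmeticFunction.pmul_apply, wf_apply, moebius_apply_prime_pow hq (by omega)]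
      rw [if_neg (by omega)]
      simp
  rw [hL, HA_apply]
  have hgcd : Nat.gcd a (q ^ k) = 1 ↔ ¬ q ∣ a := by
    show Nat.Coprime a (q ^ k) ↔ _
    rw [Nat.coprime_pow_right_iff hk, Nat.coprime_comm]
    exact hq.coprime_iff_not_dvd
  by_cases hqa : q ∣ a
  · rw [if_pos hqa, if_neg (fun h => (hgcd.mp h) hqa)]
  · have hq0' : (q : ℂ) ≠ 0 := by exact_mod_cast hq0.ne'
    rw [if_neg hqa, if_pos (hgcd.mpr hqa), Nat.totient_prime_pow hq hk]
    have h1 : ((q ^ (k-1) * (q-1) : ℕ) : ℂ) = (q:ℂ)^(k-1) * ((q:ℂ) - 1) := by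
      push_cast [Nat.cast_sub hq.one_le]; ring
    have h2 : ((q:ℂ))^k = (q:ℂ)^(k-1) * q := by
      rw [← pow_succ]; congr 1; omega
    rw [h1, div_eq_div_iff hqC (mul_ne_zero (pow_ne_zero _ hq0') hqC)]
    push_cast
    rw [h2]
    ring

end

section Char

variable {p : ℕ} [Fact p.Prime]

lemma card_dc : Fintype.card (DirichletCharacter ℂ p) = p - 1 := by
  haveI : NeZero p := ⟨(Fact.out : p.Prime).ne_zero⟩
  rw [← Nat.card_eq_fintype_card,
    DirichletCharacter.card_eq_totient_of_hasEnoughRootsOfUnity ℂ p,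
    Nat.totient_prime Fact.out]

lemma isCyclic_dc : IsCyclic (DirichletCharacter ℂ p) := by
  haveI : NeZero p := ⟨(Fact.out : p.Prime).ne_zero⟩
  obtain ⟨E⟩ := DirichletCharacter.mulEquiv_units ℂ p
  exact isCyclic_of_surjective E.symm.toMonoidHom E.symm.surjective

open Classical in
lemma card_filter_pow {c : ℕ} (hc : c ∣ p - 1) (hc0 : c ≠ 0) :
    (univ.filter (fun χ : DirichletCharacter ℂ p => χ ^ c = 1)).card = c := by
  haveI := isCyclic_dc (p := p)
  have h1 : (univ.filter (fun χ : DirichletCharacter ℂ p => χ ^ c = 1)) =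
      univ.filter (fun χ : DirichletCharacter ℂ p => orderOf χ ∣ c) := by
    apply filter_congr; intro χ _; simp [orderOf_dvd_iff_pow_eq_one]
  rw [h1, Finset.card_eq_sum_card_fiberwise
    (f := fun χ : DirichletCharacter ℂ p => orderOf χ) (t := c.divisors)
    (fun χ hχ => Nat.mem_divisors.mpr ⟨(mem_filter.mp hχ).2, hc0⟩)]
  have hcong : ∀ d ∈ c.divisors,
      ((univ.filter (fun χ : DirichletCharacter ℂ p => orderOf χ ∣ c)).filter
        (fun χ => orderOf χ = d)).card = Nat.totient d := by
    intro d hd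
    rw [Nat.mem_divisors] at hd
    have h2 : (univ.filter (fun χ : DirichletCharacter ℂ p => orderOf χ ∣ c)).filter
        (fun χ => orderOf χ = d) = univ.filter (fun χ => orderOf χ = d) := by
      rw [filter_filter]
      apply filter_congr
      intro χ _
      exact ⟨fun h => h.2, fun h => ⟨h ▸ hd.1, h⟩⟩
    rw [h2]
    have h3 := IsCyclic.card_orderOf_eq_totient (α := DirichletCharacter ℂ p) (d := d)
      (by rw [card_dc]; exact hd.1.trans hc)
    convert h3 using 2
  rw [Finset.sum_congr rfl hcong, Nat.sum_totient]

open Classical in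
lemma sum_filter_pow_of_root {c : ℕ} (hc : c ∣ p - 1) (hc0 : c ≠ 0) (u v : (ZMod p)ˣ)
    (hv : v ^ c = u) :
    ∑ χ ∈ univ.filter (fun χ : DirichletCharacter ℂ p => χ ^ c = 1), χ (u : ZMod p)
      = (c : ℂ) := by
  have hterm : ∀ χ ∈ univ.filter (fun χ : DirichletCharacter ℂ p => χ ^ c = 1),
      χ (u : ZMod p) = 1 := by
    intro χ hχ
    rw [mem_filter] at hχ
    rw [← hv, Units.val_pow_eq_pow_val, map_pow, ← MulChar.pow_apply_coe, hχ.2,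
      MulChar.one_apply_coe]
  rw [Finset.sum_congr rfl hterm, Finset.sum_const, nsmul_eq_mul, mul_one,
    card_filter_pow hc hc0]

open Classical in
lemma sum_filter_pow_of_ne {c : ℕ} (hc : c ∣ p - 1) (u : (ZMod p)ˣ)
    (hu : u ^ ((p - 1) / c) ≠ 1) :
    ∑ χ ∈ univ.filter (fun χ : DirichletCharacter ℂ p => χ ^ c = 1), χ (u : ZMod p) = 0 := by
  haveI : NeZero p := ⟨(Fact.out : p.Prime).ne_zero⟩
  set w : (ZMod p)ˣ := u ^ ((p - 1) / c) with hw_def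
  have hw : ((w : (ZMod p)ˣ) : ZMod p) ≠ 1 := by
    intro h
    exact hu (Units.ext (h.trans Units.val_one.symm))
  obtain ⟨ψ, hψ⟩ := DirichletCharacter.exists_apply_ne_one_of_hasEnoughRootsOfUnity (R := ℂ) hw
  set χ0 : DirichletCharacter ℂ p := ψ ^ ((p - 1) / c) with hχ0_def
  have hχ0c : χ0 ^ c = 1 := by
    rw [hχ0_def, ← pow_mul, Nat.div_mul_cancel hc, ← card_dc (p := p), pow_card_eq_one]
  have hχ0u : χ0 ((u : ZMod p)) ≠ 1 := by
    have h1 : χ0 ((u : ZMod p)) = ψ ((w : ZMod p)) := by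
      rw [hχ0_def, MulChar.pow_apply_coe, hw_def, Units.val_pow_eq_pow_val, map_pow]
    rw [h1]
    exact hψ
  set S := ∑ χ ∈ univ.filter (fun χ : DirichletCharacter ℂ p => χ ^ c = 1), χ (u : ZMod p)
    with hS_def
  have hmem : ∀ χ : DirichletCharacter ℂ p,
      χ ∈ univ.filter (fun χ : DirichletCharacter ℂ p => χ ^ c = 1) ↔
      χ0 * χ ∈ univ.filter (fun χ : DirichletCharacter ℂ p => χ ^ c = 1) := by
    intro χ
    simp only [mem_filter, mem_univ, true_and, mul_pow, hχ0c, one_mul]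
  have hbij := Finset.sum_bijective (fun χ : DirichletCharacter ℂ p => χ0 * χ)
    (Group.mulLeft_bijective χ0) hmem
    (f := fun χ : DirichletCharacter ℂ p => (χ0 * χ) ((u : ZMod p)))
    (g := fun χ : DirichletCharacter ℂ p => χ ((u : ZMod p))) (fun χ _ => rfl)
  have h2 : χ0 ((u : ZMod p)) * S = S := by
    rw [hS_def, Finset.mul_sum, ← hbij]
    exact Finset.sum_congr rfl fun χ _ => (MulChar.mul_apply χ0 χ _).symm
  by_contra hS
  exact hχ0u (mul_right_cancel₀ hS (by rwa [one_mul]))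

open Classical in
lemma sum_orders {c : ℕ} (hc0 : c ≠ 0) (x : ZMod p) :
    ∑ d ∈ c.divisors, ∑ χ ∈ univ.filter (fun χ : DirichletCharacter ℂ p => orderOf χ = d), χ x
      = ∑ χ ∈ univ.filter (fun χ : DirichletCharacter ℂ p => χ ^ c = 1), χ x := by
  have h1 : (univ.filter (fun χ : DirichletCharacter ℂ p => χ ^ c = 1)) =
      univ.filter (fun χ : DirichletCharacter ℂ p => orderOf χ ∣ c) := by
    apply filter_congr; intro χ _; simp [orderOf_dvd_iff_pow_eq_one]
  rw [h1, ← Finset.sum_fiberwise_of_maps_to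
    (g := fun χ : DirichletCharacter ℂ p => orderOf χ) (t := c.divisors)
    (fun χ hχ => Nat.mem_divisors.mpr ⟨(mem_filter.mp hχ).2, hc0⟩)]
  refine Finset.sum_congr rfl fun d hd => ?_
  rw [Nat.mem_divisors] at hd
  apply Finset.sum_congr _ (fun _ _ => rfl)
  rw [filter_filter]
  apply filter_congr
  intro χ _
  exact ⟨fun h => ⟨by rw [h]; exact hd.1, h⟩, fun h => h.2⟩

end Char

end EFreeAux

open Classical in
/-- Indicator function for `e`-free residues: for `p` prime, `e ∣ p - 1` and `p ∤ n`,
`(φ(e)/e) · Σ_{d ∣ e} (μ(d)/φ(d)) · Σ_{χ of order d} χ(n)` equals `1` if `n` is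
`e`-free modulo `p` and `0` otherwise. -/
theorem efree_indicator (p : ℕ) [Fact p.Prime] (e : ℕ) (he : e ∣ p - 1)
    (n : ℤ) (hn : ¬ (p : ℤ) ∣ n) :
    ((Nat.totient e : ℂ) / (e : ℂ)) *
      ∑ d ∈ e.divisors, ((ArithmeticFunction.moebius d : ℂ) / (Nat.totient d : ℂ)) *
        ∑ χ ∈ Finset.univ.filter (fun χ : DirichletCharacter ℂ p => orderOf χ = d),
          χ (n : ZMod p)
    = if IsEFree p e n then 1 else 0 := by
  have hp : p.Prime := Fact.out
  haveI : NeZero p := ⟨hp.ne_zero⟩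
  have hN : 0 < p - 1 := by have := hp.two_le; omega
  have he0 : e ≠ 0 := by rintro rfl; rw [Nat.zero_dvd] at he; omega
  have hval : ((n : ℤ) : ZMod p) ≠ 0 := by
    rw [Ne, ZMod.intCast_zmod_eq_zero_iff_dvd]; exact hn
  have hu : IsUnit ((n : ℤ) : ZMod p) := isUnit_iff_ne_zero.mpr hval
  set u : (ZMod p)ˣ := hu.unit with hu_def
  have huv : ((u : (ZMod p)ˣ) : ZMod p) = ((n : ℤ) : ZMod p) := hu.unit_spec
  obtain ⟨g, hg⟩ := IsCyclic.exists_monoid_generator (α := (ZMod p)ˣ)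
  obtain ⟨a, ha⟩ := (Submonoid.mem_powers_iff _ _).mp (hg u)
  have hcardu : Fintype.card (ZMod p)ˣ = p - 1 := by
    rw [ZMod.card_units_eq_totient, Nat.totient_prime hp]
  have hordg : orderOf g = p - 1 := by
    rw [orderOf_eq_card_of_forall_mem_zpowers, Nat.card_eq_fintype_card, hcardu]
    intro x
    obtain ⟨k, hk⟩ := (Submonoid.mem_powers_iff _ _).mp (hg x)
    exact ⟨(k : ℤ), by show g ^ (k : ℤ) = x; rw [zpow_natCast, hk]⟩
  have key : ∀ c, c ∣ p - 1 → c ≠ 0 → (u ^ ((p - 1)/c) = 1 ↔ c ∣ a) := by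
    intro c hc hc0
    rw [← ha, ← pow_mul, ← orderOf_dvd_iff_pow_eq_one, hordg]
    have h2 : p - 1 = c * ((p-1)/c) := (Nat.mul_div_cancel' hc).symm
    have h3 : 0 < (p-1)/c := Nat.div_pos (Nat.le_of_dvd hN hc) (Nat.pos_of_ne_zero hc0)
    rw [show ((p-1) ∣ a * ((p-1)/c)) ↔ (c * ((p-1)/c) ∣ a * ((p-1)/c)) from by rw [← h2]]
    exact Nat.mul_dvd_mul_iff_right h3
  have hF : ∀ c, c ∣ p - 1 → 0 < c →
      (∑ χ ∈ Finset.univ.filter (fun χ : DirichletCharacter ℂ p => χ ^ c = 1),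
        χ ((n : ℤ) : ZMod p)) = EFreeAux.fA a c := by
    intro c hc hc0
    rw [← huv, EFreeAux.fA_apply]
    by_cases hca : c ∣ a
    · rw [if_pos hca]
      exact EFreeAux.sum_filter_pow_of_root hc hc0.ne' u (g ^ (a / c))
        (by rw [← pow_mul, Nat.div_mul_cancel hca, ha])
    · rw [if_neg hca]
      exact EFreeAux.sum_filter_pow_of_ne hc u
        (fun h => hca ((key c hc hc0.ne').mp h))
  have hinv := (ArithmeticFunction.sum_eq_iff_sum_mul_moebius_eq_on
    {m : ℕ | m ∣ p - 1} (fun m m' hmm' hm' => hmm'.trans hm')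
    (f := fun d : ℕ => ∑ χ ∈ Finset.univ.filter
      (fun χ : DirichletCharacter ℂ p => orderOf χ = d), χ ((n : ℤ) : ZMod p))
    (g := fun c : ℕ => EFreeAux.fA a c)).mp
    (fun c hc0 hc => by rw [EFreeAux.sum_orders hc0.ne']; exact hF c hc hc0)
  have hTA : ∀ d ∈ e.divisors,
      (∑ χ ∈ Finset.univ.filter (fun χ : DirichletCharacter ℂ p => orderOf χ = d),
        χ ((n : ℤ) : ZMod p)) = EFreeAux.AA a d := by
    intro d hd
    have hdpos : 0 < d := Nat.pos_of_mem_divisors hd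
    rw [Nat.mem_divisors] at hd
    rw [← hinv d hdpos (hd.1.trans he)]
    rw [EFreeAux.AA, ArithmeticFunction.mul_apply]
    exact Finset.sum_congr rfl fun x _ => by rw [ArithmeticFunction.intCoe_apply]
  have hstep : ∑ d ∈ e.divisors,
      ((ArithmeticFunction.moebius d : ℂ) / (Nat.totient d : ℂ)) *
        ∑ χ ∈ Finset.univ.filter (fun χ : DirichletCharacter ℂ p => orderOf χ = d),
          χ ((n : ℤ) : ZMod p)
      = EFreeAux.LA a e := by
    rw [EFreeAux.LA, ArithmeticFunction.coe_mul_zeta_apply]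
    refine Finset.sum_congr rfl fun d hd => ?_
    rw [ArithmeticFunction.pmul_apply, EFreeAux.wf_apply, hTA d hd]
  rw [hstep, EFreeAux.LA_eq_HA, EFreeAux.HA_apply]
  have hfree : IsEFree p e n ↔ Nat.gcd a e = 1 := by
    constructor
    · intro hef
      by_contra hne
      obtain ⟨q, hq, hqd⟩ := Nat.exists_prime_and_dvd hne
      have hqa : q ∣ a := hqd.trans (Nat.gcd_dvd_left a e)
      have hqe : q ∣ e := hqd.trans (Nat.gcd_dvd_right a e)
      obtain ⟨b, hb⟩ := hqa
      have hb' : b * q = a := by rw [hb, Nat.mul_comm]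
      have hm : ((((g ^ b : (ZMod p)ˣ) : ZMod p).val : ℤ) : ZMod p)
          = ((g ^ b : (ZMod p)ˣ) : ZMod p) := by
        push_cast
        exact ZMod.natCast_rightInverse _
      have heq : ((n : ℤ) : ZMod p)
          = ((((g ^ b : (ZMod p)ˣ) : ZMod p).val : ℤ) : ZMod p) ^ q := by
        rw [hm, ← Units.val_pow_eq_pow_val, ← pow_mul, hb', ha, huv]
      exact hq.one_lt.ne' (hef _ q hqe heq)
    · intro hco m d hde hnm
      have hd0 : d ≠ 0 := by rintro rfl; exact he0 (Nat.zero_dvd.mp hde)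
      have hm0 : ((m : ℤ) : ZMod p) ≠ 0 := by
        intro h; apply hval; rw [hnm, h, zero_pow hd0]
      have hmu : IsUnit ((m : ℤ) : ZMod p) := isUnit_iff_ne_zero.mpr hm0
      obtain ⟨b, hb⟩ := (Submonoid.mem_powers_iff _ _).mp (hg hmu.unit)
      have hun : u = hmu.unit ^ d := by
        apply Units.ext
        rw [Units.val_pow_eq_pow_val, hmu.unit_spec, huv, hnm]
      rw [← hb, ← pow_mul, ← ha] at hun
      have hmod := pow_eq_pow_iff_modEq.mp hun
      rw [hordg] at hmod
      have hdN : d ∣ p - 1 := hde.trans he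
      have h1 : d ∣ (b * d) % (p - 1) := (Nat.dvd_mod_iff hdN).mpr (dvd_mul_left d b)
      have h2 : d ∣ a % (p - 1) := by
        rw [Nat.ModEq] at hmod; rw [hmod]; exact h1
      have hda : d ∣ a := (Nat.dvd_mod_iff hdN).mp h2
      exact Nat.dvd_one.mp (hco ▸ Nat.dvd_gcd hda hde)
  by_cases hco : Nat.gcd a e = 1
  · rw [if_pos hco, if_pos (hfree.mpr hco)]
    have h1 : (e : ℂ) ≠ 0 := Nat.cast_ne_zero.mpr he0
    have h2 : ((Nat.totient e : ℕ) : ℂ) ≠ 0 :=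
      Nat.cast_ne_zero.mpr (Nat.totient_pos.mpr (Nat.pos_of_ne_zero he0)).ne'
    field_simp
  · rw [if_neg hco, if_neg (fun h => hco (hfree.mp h)), mul_zero]
end

section
/- Let χ be a non-principal Dirichlet character modulo a prime p and x ≥ 1 a real number. Then |Σ_{n ≤ x, n square-free} χ(n)| ≤ 2 · x^{1/2} · p^{1/4} · (log p)^{1/2}. -/
open Finset Real

open ArithmeticFunction ArithmeticFunction.Moebius in
lemma moebius_sq_dvd_sum (n : ℕ) (hn : n ≠ 0) :
    ∑ d ∈ n.divisors.filter (fun d => d ^ 2 ∣ n), μ d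
      = if Squarefree n then 1 else 0 := by
  classical
  set g : ℕ →₀ ℕ := Finsupp.mapRange (· / 2) (by norm_num) n.factorization with hg
  have hgval : ∀ q, g q = n.factorization q / 2 := fun q => Finsupp.mapRange_apply
  have hgprime : ∀ q ∈ g.support, Nat.Prime q := by
    intro q hq
    have : q ∈ n.factorization.support := by
      have := Finsupp.support_mapRange (f := (· / 2)) (hf := by norm_num)
        (g := n.factorization)
      exact this hq
    exact Nat.prime_of_mem_primeFactors (by rwa [Nat.support_factorization] at this)
  set r : ℕ := g.prod (· ^ ·) with hr
  have hrfac : r.factorization = g :=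
    Nat.prod_pow_factorization_eq_self (fun q hq => hgprime q hq)
  have hr0 : r ≠ 0 := by
    rw [hr, Finsupp.prod]
    exact Finset.prod_ne_zero_iff.mpr fun q hq =>
      pow_ne_zero _ (hgprime q hq).pos.ne'
  have key : ∀ d : ℕ, d ≠ 0 → (d ^ 2 ∣ n ↔ d ∣ r) := by
    intro d hd
    rw [← Nat.factorization_le_iff_dvd (pow_ne_zero 2 hd) hn,
      ← Nat.factorization_le_iff_dvd hd hr0, hrfac, Nat.factorization_pow]
    constructor
    · intro h q
      have := h q
      simp only [Finsupp.smul_apply, smul_eq_mul] at this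
      rw [hgval]
      rw [Nat.le_div_iff_mul_le (by norm_num)]
      omega
    · intro h q
      have := h q
      rw [hgval q, Nat.le_div_iff_mul_le (by norm_num)] at this
      simp only [Finsupp.smul_apply, smul_eq_mul]
      omega
  have hset : n.divisors.filter (fun d => d ^ 2 ∣ n) = r.divisors := by
    ext d
    simp only [Finset.mem_filter, Nat.mem_divisors]
    constructor
    · rintro ⟨⟨hdn, -⟩, hd2⟩
      have hd0 : d ≠ 0 := by rintro rfl; exact hn (zero_dvd_iff.mp hdn)
      exact ⟨(key d hd0).mp hd2, hr0⟩
    · rintro ⟨hdr, -⟩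
      have hd0 : d ≠ 0 := by rintro rfl; exact hr0 (zero_dvd_iff.mp hdr)
      have hd2 : d ^ 2 ∣ n := (key d hd0).mpr hdr
      exact ⟨⟨(dvd_pow_self d two_ne_zero).trans hd2, hn⟩, hd2⟩
  have hsq : Squarefree n ↔ r = 1 := by
    rw [Nat.squarefree_iff_factorization_le_one hn]
    constructor
    · intro h
      have hg0 : g = 0 := by
        ext q
        rw [hgval]
        exact Nat.div_eq_of_lt (Nat.lt_succ_of_le (h q))
      rw [hr, hg0, Finsupp.prod_zero_index]
    · intro h q
      have : g q = 0 := by rw [← hrfac, h, Nat.factorization_one]; rfl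
      rw [hgval] at this
      omega
  rw [hset]
  have h2 := ArithmeticFunction.coe_mul_zeta_apply (f := (μ : ArithmeticFunction ℤ)) (x := r)
  rw [moebius_mul_coe_zeta, ArithmeticFunction.one_apply] at h2
  rw [← h2]
  simp [hsq]

open ArithmeticFunction ArithmeticFunction.Moebius in
lemma char_sum_sf_eq (p : ℕ) [Fact p.Prime] (χ : DirichletCharacter ℂ p) (N : ℕ) :
    ∑ n ∈ (Finset.Icc 1 N).filter (fun n => Squarefree n), χ (n : ZMod p)
      = ∑ d ∈ Finset.Icc 1 N, (μ d : ℂ) *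
          (χ (d : ZMod p) ^ 2 * ∑ m ∈ Finset.Icc 1 (N / d ^ 2), χ (m : ZMod p)) := by
  classical
  rw [Finset.sum_filter]
  have h1 : ∀ n ∈ Finset.Icc 1 N, (if Squarefree n then χ (n : ZMod p) else 0)
      = ∑ d ∈ Finset.Icc 1 N,
          (if d ^ 2 ∣ n then (μ d : ℂ) else 0) * χ (n : ZMod p) := by
    intro n hn
    rw [Finset.mem_Icc] at hn
    have hn0 : n ≠ 0 := by omega
    rw [← Finset.sum_mul]
    have hind : (∑ d ∈ Finset.Icc 1 N, if d ^ 2 ∣ n then (μ d : ℂ) else 0)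
        = if Squarefree n then 1 else 0 := by
      rw [← Finset.sum_filter]
      have hset : (Finset.Icc 1 N).filter (fun d => d ^ 2 ∣ n)
          = n.divisors.filter (fun d => d ^ 2 ∣ n) := by
        ext d
        simp only [Finset.mem_filter, Finset.mem_Icc, Nat.mem_divisors]
        constructor
        · rintro ⟨-, hd2⟩
          exact ⟨⟨(dvd_pow_self d two_ne_zero).trans hd2, hn0⟩, hd2⟩
        · rintro ⟨⟨hdn, -⟩, hd2⟩
          have hd0 : d ≠ 0 := by rintro rfl; exact hn0 (zero_dvd_iff.mp hdn)
          exact ⟨⟨by omega, (Nat.le_of_dvd (by omega) hdn).trans hn.2⟩, hd2⟩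
      rw [hset]
      have := moebius_sq_dvd_sum n hn0
      have hcast : ((∑ d ∈ n.divisors.filter (fun d => d ^ 2 ∣ n), μ d : ℤ) : ℂ)
          = ∑ d ∈ n.divisors.filter (fun d => d ^ 2 ∣ n), (μ d : ℂ) := by
        push_cast; rfl
      rw [← hcast, this]
      split_ifs <;> simp
    rw [hind]
    split_ifs <;> simp
  rw [Finset.sum_congr rfl h1, Finset.sum_comm]
  refine Finset.sum_congr rfl fun d hd => ?_
  rw [Finset.mem_Icc] at hd
  have hd2 : 0 < d ^ 2 := pow_pos (by omega) 2
  have hstep : ∀ n ∈ Finset.Icc 1 N,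
      (if d ^ 2 ∣ n then (μ d : ℂ) else 0) * χ (n : ZMod p)
        = if d ^ 2 ∣ n then (μ d : ℂ) * χ (n : ZMod p) else 0 := by
    intro n _; split_ifs <;> simp
  rw [Finset.sum_congr rfl hstep, ← Finset.sum_filter, ← Finset.mul_sum]
  congr 1
  have hre : ∑ n ∈ (Finset.Icc 1 N).filter (fun n => d ^ 2 ∣ n), χ (n : ZMod p)
      = ∑ m ∈ Finset.Icc 1 (N / d ^ 2), χ ((d ^ 2 * m : ℕ) : ZMod p) := by
    refine Finset.sum_nbij' (fun n => n / d ^ 2) (fun m => d ^ 2 * m) ?_ ?_ ?_ ?_ ?_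
    · intro n hn
      simp only [Finset.mem_filter, Finset.mem_Icc] at hn ⊢
      obtain ⟨⟨hn1, hnN⟩, hdvd⟩ := hn
      constructor
      · exact (Nat.one_le_div_iff hd2).mpr (Nat.le_of_dvd (by omega) hdvd)
      · exact Nat.div_le_div_right hnN
    · intro m hm
      simp only [Finset.mem_Icc] at hm
      obtain ⟨hm1, hm2⟩ := hm
      refine Finset.mem_filter.mpr ⟨Finset.mem_Icc.mpr ⟨?_, ?_⟩, ⟨m, rfl⟩⟩
      · exact Nat.one_le_iff_ne_zero.mpr (Nat.mul_ne_zero hd2.ne' (by omega))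
      · calc d ^ 2 * m = m * d ^ 2 := mul_comm _ _
          _ ≤ N := (Nat.le_div_iff_mul_le hd2).mp hm2
    · intro n hn
      simp only [Finset.mem_filter] at hn
      exact Nat.mul_div_cancel' hn.2
    · intro m _
      exact Nat.mul_div_cancel_left m hd2
    · intro n hn
      simp only [Finset.mem_filter] at hn
      rw [Nat.mul_div_cancel' hn.2]
  rw [hre]
  rw [Finset.mul_sum]
  refine Finset.sum_congr rfl fun m _ => ?_
  push_cast
  rw [map_mul, map_pow]

lemma sum_inv_sq_Ioc (D N : ℕ) :
    ∑ d ∈ Finset.Ioc D N, (1 : ℝ) / (d : ℝ) ^ 2 ≤ 1 / ((D : ℝ) + 1 / 2) := by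
  have hDpos : (0 : ℝ) < (D : ℝ) + 1 / 2 := by positivity
  set f : ℕ → ℝ := fun k => 1 / ((D : ℝ) + 1 / 2 + k) with hf
  have hstep : ∀ d ∈ Finset.Ioc D N, (1 : ℝ) / (d : ℝ) ^ 2
      ≤ f (d - (D + 1)) - f (d - (D + 1) + 1) := by
    intro d hd
    rw [Finset.mem_Ioc] at hd
    have hd1 : (1 : ℝ) ≤ (d : ℝ) := by exact_mod_cast Nat.one_le_iff_ne_zero.mpr (by omega)
    have hDd : (D : ℝ) + 1 ≤ (d : ℝ) := by exact_mod_cast hd.1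
    have hcast : ((d - (D + 1) : ℕ) : ℝ) = (d : ℝ) - (D : ℝ) - 1 := by
      have : D + 1 ≤ d := hd.1
      push_cast [Nat.cast_sub this]
      ring
    simp only [hf, Nat.cast_add, Nat.cast_one, hcast]
    have h1 : (0 : ℝ) < (d : ℝ) - 1 / 2 := by linarith
    have h2 : (0 : ℝ) < (d : ℝ) + 1 / 2 := by linarith
    have he1 : (D : ℝ) + 1 / 2 + ((d : ℝ) - (D : ℝ) - 1) = (d : ℝ) - 1 / 2 := by ring
    have he2 : (D : ℝ) + 1 / 2 + ((d : ℝ) - (D : ℝ) - 1 + 1) = (d : ℝ) + 1 / 2 := by ring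
    rw [he1, he2, div_sub_div _ _ h1.ne' h2.ne']
    have hd2 : (0 : ℝ) < (d : ℝ) ^ 2 := by positivity
    rw [div_le_div_iff₀ hd2 (by nlinarith)]
    ring_nf
    nlinarith
  calc ∑ d ∈ Finset.Ioc D N, (1 : ℝ) / (d : ℝ) ^ 2
      ≤ ∑ d ∈ Finset.Ioc D N, (f (d - (D + 1)) - f (d - (D + 1) + 1)) :=
        Finset.sum_le_sum hstep
    _ = ∑ i ∈ Finset.range (N + 1 - (D + 1)), (f i - f (i + 1)) := by
        rw [← Finset.Ico_add_one_add_one_eq_Ioc, Finset.sum_Ico_eq_sum_range]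
        refine Finset.sum_congr rfl fun i _ => ?_
        congr 2 <;> omega
    _ = f 0 - f (N + 1 - (D + 1)) := Finset.sum_range_sub' f _
    _ ≤ f 0 := by
        have : 0 ≤ f (N + 1 - (D + 1)) := by positivity
        linarith
    _ = 1 / ((D : ℝ) + 1 / 2) := by simp [hf]

open ArithmeticFunction ArithmeticFunction.Moebius in
/-- For a non-principal Dirichlet character `χ` modulo a prime `p` and real `x ≥ 1`,
assuming Pólya–Vinogradov, the sum of `χ(n)` over square-free positive `n ≤ x` is at
most `2 · x^{1/2} · p^{1/4} · (log p)^{1/2}` in absolute value. -/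
theorem char_sum_squarefree_bound (p : ℕ) (hp : p.Prime) [Fact p.Prime]
    (χ : DirichletCharacter ℂ p) (hχ : χ ≠ 1)
    (hPV : ∀ M N : ℕ, ‖∑ n ∈ Finset.Ioc M N, χ (n : ZMod p)‖ ≤ Real.sqrt p * Real.log p)
    (x : ℝ) (hx : 1 ≤ x) :
    ‖∑ n ∈ (Finset.Icc 1 ⌊x⌋₊).filter (fun n => Squarefree n), χ (n : ZMod p)‖ ≤
      2 * x ^ ((1 : ℝ) / 2) * (p : ℝ) ^ ((1 : ℝ) / 4) * (Real.log p) ^ ((1 : ℝ) / 2) := by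
  classical
  have hp2 : 2 ≤ p := hp.two_le
  have hx0 : (0 : ℝ) < x := by linarith
  set a : ℝ := Real.sqrt p * Real.log p with ha
  have hlogp : 0 < Real.log p := Real.log_pos (by exact_mod_cast hp2)
  have hsp : (0 : ℝ) < Real.sqrt p := Real.sqrt_pos.mpr (by positivity)
  have ha0 : 0 < a := mul_pos hsp hlogp
  set N : ℕ := ⌊x⌋₊ with hN
  have hNx : (N : ℝ) ≤ x := Nat.floor_le hx0.le
  set y : ℝ := Real.sqrt (x / a) with hy
  have hy0 : 0 ≤ y := Real.sqrt_nonneg _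
  set D : ℕ := ⌊y⌋₊ with hD
  have hDy : (D : ℝ) ≤ y := Nat.floor_le hy0
  have hyD : y < (D : ℝ) + 1 := Nat.lt_floor_add_one y
  have hy2 : y ^ 2 = x / a := Real.sq_sqrt (by positivity)
  have hxya : x = y ^ 2 * a := by rw [hy2]; field_simp
  -- bound each term
  have hterm : ∀ d ∈ Finset.Icc 1 N,
      ‖(μ d : ℂ) * (χ (d : ZMod p) ^ 2 * ∑ m ∈ Finset.Icc 1 (N / d ^ 2), χ (m : ZMod p))‖
        ≤ if d ≤ D then a else x / (d : ℝ) ^ 2 := by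
    intro d hd
    rw [Finset.mem_Icc] at hd
    have hinner : ‖∑ m ∈ Finset.Icc 1 (N / d ^ 2), χ (m : ZMod p)‖
        ≤ min a (x / (d : ℝ) ^ 2) := by
      refine le_min ?_ ?_
      · have := hPV 0 (N / d ^ 2)
        rwa [show Finset.Ioc 0 (N / d ^ 2) = Finset.Icc 1 (N / d ^ 2) from rfl] at this
      · calc ‖∑ m ∈ Finset.Icc 1 (N / d ^ 2), χ (m : ZMod p)‖
            ≤ ∑ m ∈ Finset.Icc 1 (N / d ^ 2), ‖χ (m : ZMod p)‖ := norm_sum_le _ _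
          _ ≤ ∑ m ∈ Finset.Icc 1 (N / d ^ 2), 1 :=
              Finset.sum_le_sum fun m _ => DirichletCharacter.norm_le_one χ _
          _ = ((N / d ^ 2 : ℕ) : ℝ) := by simp
          _ ≤ (N : ℝ) / ((d : ℝ) ^ 2) := by
              have := Nat.cast_div_le (m := N) (n := d ^ 2) (α := ℝ)
              push_cast at this ⊢
              exact this
          _ ≤ x / (d : ℝ) ^ 2 := by
              apply div_le_div_of_nonneg_right hNx ?_ |>.trans_eq rfl
              have : (1 : ℕ) ≤ d := hd.1
              have : (1 : ℝ) ≤ (d : ℝ) := by exact_mod_cast this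
              positivity
    have hmu : ‖((μ d : ℤ) : ℂ)‖ ≤ 1 := by
      rw [Complex.norm_intCast]
      exact_mod_cast ArithmeticFunction.abs_moebius_le_one
    have hchi : ‖χ (d : ZMod p) ^ 2‖ ≤ 1 := by
      rw [norm_pow]
      exact pow_le_one₀ (norm_nonneg _) (DirichletCharacter.norm_le_one χ _)
    have hnn : 0 ≤ ‖∑ m ∈ Finset.Icc 1 (N / d ^ 2), χ (m : ZMod p)‖ := norm_nonneg _
    have hprod : ‖(μ d : ℂ) * (χ (d : ZMod p) ^ 2 *
        ∑ m ∈ Finset.Icc 1 (N / d ^ 2), χ (m : ZMod p))‖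
        ≤ ‖∑ m ∈ Finset.Icc 1 (N / d ^ 2), χ (m : ZMod p)‖ := by
      rw [norm_mul, norm_mul]
      calc ‖((μ d : ℤ) : ℂ)‖ * (‖χ (d : ZMod p) ^ 2‖ * ‖∑ m ∈ Finset.Icc 1 (N / d ^ 2), χ (m : ZMod p)‖)
          ≤ 1 * (1 * ‖∑ m ∈ Finset.Icc 1 (N / d ^ 2), χ (m : ZMod p)‖) := by
            apply mul_le_mul hmu ?_ (by positivity) zero_le_one
            apply mul_le_mul hchi le_rfl hnn zero_le_one
        _ = _ := by ring
    refine hprod.trans ?_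
    split_ifs with hdD
    · exact hinner.trans (min_le_left _ _)
    · exact hinner.trans (min_le_right _ _)
  -- main estimate
  have hbound : ‖∑ n ∈ (Finset.Icc 1 N).filter (fun n => Squarefree n), χ (n : ZMod p)‖
      ≤ (D : ℝ) * a + x / ((D : ℝ) + 1 / 2) := by
    rw [char_sum_sf_eq p χ N]
    calc ‖∑ d ∈ Finset.Icc 1 N, (μ d : ℂ) *
          (χ (d : ZMod p) ^ 2 * ∑ m ∈ Finset.Icc 1 (N / d ^ 2), χ (m : ZMod p))‖
        ≤ ∑ d ∈ Finset.Icc 1 N, ‖(μ d : ℂ) *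
          (χ (d : ZMod p) ^ 2 * ∑ m ∈ Finset.Icc 1 (N / d ^ 2), χ (m : ZMod p))‖ :=
          norm_sum_le _ _
      _ ≤ ∑ d ∈ Finset.Icc 1 N, (if d ≤ D then a else x / (d : ℝ) ^ 2) :=
          Finset.sum_le_sum hterm
      _ = (∑ d ∈ (Finset.Icc 1 N).filter (fun d => d ≤ D), a)
          + ∑ d ∈ (Finset.Icc 1 N).filter (fun d => ¬ d ≤ D), x / (d : ℝ) ^ 2 :=
          by rw [Finset.sum_ite]
      _ ≤ (D : ℝ) * a + x / ((D : ℝ) + 1 / 2) := by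
          gcongr
          · rw [Finset.sum_const, nsmul_eq_mul]
            have hcard : ((Finset.Icc 1 N).filter (fun d => d ≤ D)).card ≤ D := by
              have hsub : (Finset.Icc 1 N).filter (fun d => d ≤ D) ⊆ Finset.Icc 1 D := by
                intro d hdm
                simp only [Finset.mem_filter, Finset.mem_Icc] at hdm ⊢
                omega
              calc _ ≤ (Finset.Icc 1 D).card := Finset.card_le_card hsub
                _ = D := by rw [Nat.card_Icc]; omega
            exact mul_le_mul_of_nonneg_right (by exact_mod_cast hcard) ha0.le
          · calc ∑ d ∈ (Finset.Icc 1 N).filter (fun d => ¬ d ≤ D), x / (d : ℝ) ^ 2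
                ≤ ∑ d ∈ Finset.Ioc D N, x / (d : ℝ) ^ 2 := by
                  apply Finset.sum_le_sum_of_subset_of_nonneg
                  · intro d hdm
                    simp only [Finset.mem_filter, Finset.mem_Icc] at hdm
                    rw [Finset.mem_Ioc]; omega
                  · intro d hd1 hd2
                    positivity
              _ = x * ∑ d ∈ Finset.Ioc D N, (1 : ℝ) / (d : ℝ) ^ 2 := by
                  rw [Finset.mul_sum]; exact Finset.sum_congr rfl fun d _ => by ring
              _ ≤ x * (1 / ((D : ℝ) + 1 / 2)) :=
                  mul_le_mul_of_nonneg_left (sum_inv_sq_Ioc D N) hx0.le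
              _ = x / ((D : ℝ) + 1 / 2) := by ring
  -- final arithmetic
  have hfinal : (D : ℝ) * a + x / ((D : ℝ) + 1 / 2) ≤ 2 * (y * a) := by
    have hDhalf : (0 : ℝ) < (D : ℝ) + 1 / 2 := by positivity
    have hf : 0 ≤ (y - (D : ℝ)) * (1 - (y - (D : ℝ))) :=
      mul_nonneg (by linarith) (by linarith)
    have h1 : x / ((D : ℝ) + 1 / 2) ≤ (2 * y - (D : ℝ)) * a := by
      rw [div_le_iff₀ hDhalf, hxya]
      nlinarith [mul_nonneg hf ha0.le,
        mul_nonneg (Nat.cast_nonneg (α := ℝ) D) ha0.le]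
    nlinarith [h1]
  have hrhs : 2 * (y * a) = 2 * x ^ ((1 : ℝ) / 2) * (p : ℝ) ^ ((1 : ℝ) / 4)
      * (Real.log p) ^ ((1 : ℝ) / 2) := by
    have hane : a ≠ 0 := ha0.ne'
    have h1 : y * a = Real.sqrt (x * a) := by
      rw [hy, ← Real.sqrt_sq ha0.le, ← Real.sqrt_mul (by positivity)]
      congr 1
      field_simp
      simp [Real.sqrt_sq ha0.le]
    rw [h1, Real.sqrt_mul hx0.le, ha, Real.sqrt_mul hsp.le]
    simp only [Real.sqrt_eq_rpow]
    rw [← Real.rpow_mul (Nat.cast_nonneg p)]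
    norm_num
    ring
  calc ‖∑ n ∈ (Finset.Icc 1 N).filter (fun n => Squarefree n), χ (n : ZMod p)‖
      ≤ (D : ℝ) * a + x / ((D : ℝ) + 1 / 2) := hbound
    _ ≤ 2 * (y * a) := hfinal
    _ = _ := hrhs
end
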